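/- arXiv:0806.3417 — 2 statements merged into one kernel-verified Lean document; each statement's English description precedes it below -/
import Mathlib

section
/- (Logarithmic interpolation) Let (p, λ) ∈ [1,∞]², s ∈ ℝ, t ≥ 0, ε ∈ (0,1], and let u belong to L̃^λ_t(Ḃ^{s−ε}_{p,∞}) ∩ L̃^λ_t(Ḃ^s_{p,1}) ∩ L̃^λ_t(Ḃ^{s+ε}_{p,∞}). Then there is a constant C depending only on the dimension such that ‖u‖_{L̃^λ_t(Ḃ^s_{p,1})} ≤ C (‖u‖_{L̃^λ_t(Ḃ^s_{p,∞})} / ε) · log(e + (‖u‖_{L̃^λ_t(Ḃ^{s−ε}_{p,∞})} + ‖u‖_{L̃^λ_t(Ḃ^{s+ε}_{p,∞})}) / ‖u‖_{L̃^λ_t(Ḃ^s_{p,∞})}). -/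
open MeasureTheory ENNReal

noncomputable section

/-- Time-Lebesgue norm of a Littlewood–Paley block, `(∫₀^t F(q,τ)^λ dτ)^{1/λ}`
(essential supremum if `λ = ∞`), where `F q τ = ‖Δ_q u(τ)‖_{L^p}`. -/
def blockTimeNorm (t : ℝ) (lam : ℝ≥0∞) (F : ℤ → ℝ → ℝ≥0∞) (q : ℤ) : ℝ≥0∞ :=
  if lam = ∞ then essSup (F q) (volume.restrict (Set.Icc 0 t))
  else (∫⁻ τ in Set.Icc 0 t, (F q τ) ^ lam.toReal) ^ (1 / lam.toReal)

/-- The Chemin–Lerner norm `‖u‖_{L̃^λ_t(Ḃ^σ_{p,∞})} = sup_q 2^{qσ} ‖Δ_q u‖_{L^λ_t(L^p)}`. -/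
def clNormInfty (t : ℝ) (lam : ℝ≥0∞) (σ : ℝ) (F : ℤ → ℝ → ℝ≥0∞) : ℝ≥0∞ :=
  ⨆ q : ℤ, ENNReal.ofReal ((2:ℝ) ^ ((q : ℝ) * σ)) * blockTimeNorm t lam F q

/-- The Chemin–Lerner norm `‖u‖_{L̃^λ_t(Ḃ^σ_{p,1})} = ∑_q 2^{qσ} ‖Δ_q u‖_{L^λ_t(L^p)}`. -/
def clNormOne (t : ℝ) (lam : ℝ≥0∞) (σ : ℝ) (F : ℤ → ℝ → ℝ≥0∞) : ℝ≥0∞ :=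
  ∑' q : ℤ, ENNReal.ofReal ((2:ℝ) ^ ((q : ℝ) * σ)) * blockTimeNorm t lam F q

private lemma aux_interp {A B K b : ℝ≥0∞} {c d e : ℝ}
    (h1 : ENNReal.ofReal ((2:ℝ) ^ d) * b ≤ K) (hKB : K ≤ B)
    (hBA : B ≤ ENNReal.ofReal ((2:ℝ) ^ e) * A) :
    ENNReal.ofReal ((2:ℝ) ^ c) * b ≤ A * ENNReal.ofReal ((2:ℝ) ^ (c - d + e)) := by
  have h2 : (2:ℝ) ^ c = (2:ℝ) ^ (c - d) * (2:ℝ) ^ d := by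
    rw [← Real.rpow_add (by norm_num : (0:ℝ) < 2), sub_add_cancel]
  calc ENNReal.ofReal ((2:ℝ) ^ c) * b
      = ENNReal.ofReal ((2:ℝ) ^ (c - d)) * (ENNReal.ofReal ((2:ℝ) ^ d) * b) := by
        rw [h2, ENNReal.ofReal_mul (Real.rpow_nonneg (by norm_num) _), mul_assoc]
    _ ≤ ENNReal.ofReal ((2:ℝ) ^ (c - d)) * B := mul_le_mul_right (h1.trans hKB) _
    _ ≤ ENNReal.ofReal ((2:ℝ) ^ (c - d)) * (ENNReal.ofReal ((2:ℝ) ^ e) * A) :=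
        mul_le_mul_right hBA _
    _ = A * ENNReal.ofReal ((2:ℝ) ^ (c - d + e)) := by
        rw [← mul_assoc, ← ENNReal.ofReal_mul (Real.rpow_nonneg (by norm_num) _),
          ← Real.rpow_add (by norm_num : (0:ℝ) < 2), mul_comm]

private lemma eps_le_one_sub_rpow {ε : ℝ} (hε : 0 < ε) (hε1 : ε ≤ 1) :
    ε / 3 ≤ 1 - (2:ℝ) ^ (-ε) := by
  have hlg : (0.6931471803 : ℝ) < Real.log 2 := Real.log_two_gt_d9
  have hlgpos : (0:ℝ) < Real.log 2 := by linarith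
  have h2 : (2:ℝ) ^ (-ε) = Real.exp (-(ε * Real.log 2)) := by
    rw [Real.rpow_def_of_pos (by norm_num : (0:ℝ) < 2)]
    congr 1; ring
  have hc : (0:ℝ) < 1 + ε * Real.log 2 := by positivity
  have h1c : 1 + ε * Real.log 2 ≤ Real.exp (ε * Real.log 2) := by
    linarith [Real.add_one_le_exp (ε * Real.log 2)]
  have hinv : Real.exp (-(ε * Real.log 2)) ≤ (1 + ε * Real.log 2)⁻¹ := by
    rw [Real.exp_neg]
    exact inv_anti₀ hc h1c
  have hid : (1:ℝ) / (1 + ε * Real.log 2) ≤ 1 - ε / 3 := by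
    rw [div_le_iff₀ hc]
    nlinarith [mul_pos hε hlgpos,
      mul_le_mul_of_nonneg_right hε1 (mul_pos hε hlgpos).le,
      mul_lt_mul_of_pos_left hlg hε]
  rw [one_div] at hid
  rw [h2]
  linarith [hinv.trans hid]

set_option maxHeartbeats 1000000 in
/-- **Logarithmic interpolation.**
Let `p, λ ∈ [1,∞]`, `s ∈ ℝ`, `t ≥ 0`, `ε ∈ (0,1]`, and let `u` belong to
`L̃^λ_t(Ḃ^{s−ε}_{p,∞}) ∩ L̃^λ_t(Ḃ^s_{p,1}) ∩ L̃^λ_t(Ḃ^{s+ε}_{p,∞})` (finiteness of the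
corresponding norms of the blocks `F q τ = ‖Δ_q u(τ)‖_{L^p}`).  Then there is a constant
`C` depending only on the dimension (here: absolute) such that
`‖u‖_{L̃^λ_t(Ḃ^s_{p,1})} ≤ C (‖u‖_{L̃^λ_t(Ḃ^s_{p,∞})}/ε) · log(e +
(‖u‖_{L̃^λ_t(Ḃ^{s−ε}_{p,∞})} + ‖u‖_{L̃^λ_t(Ḃ^{s+ε}_{p,∞})}) / ‖u‖_{L̃^λ_t(Ḃ^s_{p,∞})})`. -/
theorem logarithmic_interpolation :
    ∃ C : ℝ, 0 < C ∧
      ∀ (N : ℕ) (p lam : ℝ≥0∞), 1 ≤ p → 1 ≤ lam →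
      ∀ (s : ℝ) (t : ℝ), 0 ≤ t →
      ∀ ε : ℝ, 0 < ε → ε ≤ 1 →
      ∀ (u : ℝ → EuclideanSpace ℝ (Fin N) → ℂ)
        (Δ : ℤ → (EuclideanSpace ℝ (Fin N) → ℂ) → EuclideanSpace ℝ (Fin N) → ℂ)
        (F : ℤ → ℝ → ℝ≥0∞),
        (∀ q τ, F q τ = eLpNorm (Δ q (u τ)) p volume) →
        clNormInfty t lam (s - ε) F ≠ ∞ →
        clNormOne t lam s F ≠ ∞ →
        clNormInfty t lam (s + ε) F ≠ ∞ →
        (clNormOne t lam s F).toReal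
          ≤ C * ((clNormInfty t lam s F).toReal / ε) *
              Real.log (Real.exp 1 +
                ((clNormInfty t lam (s - ε) F).toReal
                  + (clNormInfty t lam (s + ε) F).toReal)
                / (clNormInfty t lam s F).toReal) := by
  refine ⟨16, by norm_num, ?_⟩
  intro N p lam _hp _hlam s t _ht ε hε hε1 u Δ F _hF hAm hS hAp
  have hle : ∀ (σ : ℝ) (q : ℤ),
      ENNReal.ofReal ((2:ℝ) ^ ((q:ℝ) * σ)) * blockTimeNorm t lam F q
        ≤ clNormInfty t lam σ F := fun σ q =>
    le_iSup (fun q : ℤ => ENNReal.ofReal ((2:ℝ) ^ ((q:ℝ) * σ)) * blockTimeNorm t lam F q) q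
  have hone : clNormOne t lam s F
      = ∑' q : ℤ, ENNReal.ofReal ((2:ℝ) ^ ((q:ℝ) * s)) * blockTimeNorm t lam F q := rfl
  have hAleS : clNormInfty t lam s F ≤ clNormOne t lam s F := by
    simp only [clNormInfty, clNormOne]
    exact iSup_le fun q => ENNReal.le_tsum q
  have hAne : clNormInfty t lam s F ≠ ∞ := ne_top_of_le_ne_top hS hAleS
  by_cases hA0 : clNormInfty t lam s F = 0
  · have hzero : clNormOne t lam s F = 0 := by
      rw [hone]
      refine ENNReal.tsum_eq_zero.mpr fun q => ?_
      simpa using (hle s q).trans hA0.le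
    rw [hzero, hA0]
    simp
  -- main case
  set A := clNormInfty t lam s F with hAdef
  set Am := clNormInfty t lam (s - ε) F with hAmdef
  set Ap := clNormInfty t lam (s + ε) F with hApdef
  have apos : 0 < A.toReal := ENNReal.toReal_pos hA0 hAne
  have hBne : Am + Ap ≠ ∞ := ENNReal.add_ne_top.mpr ⟨hAm, hAp⟩
  set R : ℝ := (Am.toReal + Ap.toReal) / A.toReal with hRdef
  have hR0 : 0 ≤ R := by
    rw [hRdef]
    positivity
  set L : ℝ := Real.log (Real.exp 1 + R) with hLdef
  have hL1 : 1 ≤ L := by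
    have h := (Real.log_le_log_iff (Real.exp_pos 1) (by positivity)).mpr
      (by linarith : Real.exp 1 ≤ Real.exp 1 + R)
    rwa [Real.log_exp] at h
  have hexpL : Real.exp L = Real.exp 1 + R := Real.exp_log (by positivity)
  have hlg : (0.6931471803 : ℝ) < Real.log 2 := Real.log_two_gt_d9
  have hlg2 : Real.log 2 < 0.6931471808 := Real.log_two_lt_d9
  have hlgpos : (0:ℝ) < Real.log 2 := by linarith
  set M := ⌈L / (ε * Real.log 2)⌉₊ with hMdef
  have hM1 : L / (ε * Real.log 2) ≤ (M:ℝ) := Nat.le_ceil _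
  have hM2 : (M:ℝ) < L / (ε * Real.log 2) + 1 := Nat.ceil_lt_add_one (by positivity)
  have hML : L ≤ Real.log 2 * ((M:ℝ) * ε) := by
    rw [div_le_iff₀ (by positivity)] at hM1
    calc L ≤ (M:ℝ) * (ε * Real.log 2) := hM1
      _ = Real.log 2 * ((M:ℝ) * ε) := by ring
  have hpowM : (Am + Ap).toReal ≤ (2:ℝ) ^ ((M:ℝ) * ε) * A.toReal := by
    have hBR : (Am + Ap).toReal = R * A.toReal := by
      rw [ENNReal.toReal_add hAm hAp, hRdef]
      field_simp
    have h2M : R ≤ (2:ℝ) ^ ((M:ℝ) * ε) := by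
      have h2exp : (2:ℝ) ^ ((M:ℝ) * ε) = Real.exp (Real.log 2 * ((M:ℝ) * ε)) :=
        Real.rpow_def_of_pos (by norm_num) _
      rw [h2exp]
      calc R ≤ Real.exp 1 + R := by linarith [(Real.exp_pos 1).le]
        _ = Real.exp L := hexpL.symm
        _ ≤ Real.exp (Real.log 2 * ((M:ℝ) * ε)) := Real.exp_le_exp.mpr hML
    rw [hBR]
    exact mul_le_mul_of_nonneg_right h2M ENNReal.toReal_nonneg
  have hMB : Am + Ap ≤ ENNReal.ofReal ((2:ℝ) ^ ((M:ℝ) * ε)) * A := by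
    calc Am + Ap = ENNReal.ofReal ((Am + Ap).toReal) := (ENNReal.ofReal_toReal hBne).symm
      _ ≤ ENNReal.ofReal ((2:ℝ) ^ ((M:ℝ) * ε) * A.toReal) := ENNReal.ofReal_le_ofReal hpowM
      _ = ENNReal.ofReal ((2:ℝ) ^ ((M:ℝ) * ε)) * ENNReal.ofReal A.toReal :=
          ENNReal.ofReal_mul (Real.rpow_nonneg (by norm_num) _)
      _ = ENNReal.ofReal ((2:ℝ) ^ ((M:ℝ) * ε)) * A := by rw [ENNReal.ofReal_toReal hAne]
  -- pointwise bound
  have hpt : ∀ q : ℤ, ENNReal.ofReal ((2:ℝ) ^ ((q:ℝ) * s)) * blockTimeNorm t lam F q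
      ≤ A * min 1 (ENNReal.ofReal ((2:ℝ) ^ (((M:ℝ) - |(q:ℝ)|) * ε))) := by
    intro q
    have hmono : Monotone (fun y : ℝ≥0∞ => A * y) := fun _ _ h => mul_le_mul_right h A
    rw [show A * min 1 (ENNReal.ofReal ((2:ℝ) ^ (((M:ℝ) - |(q:ℝ)|) * ε)))
      = min (A * 1) (A * ENNReal.ofReal ((2:ℝ) ^ (((M:ℝ) - |(q:ℝ)|) * ε))) from hmono.map_min]
    refine le_min ?_ ?_
    · rw [mul_one]
      exact hle s q
    · rcases le_or_gt 0 (q:ℝ) with hq | hq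
      · have habs : |(q:ℝ)| = (q:ℝ) := abs_of_nonneg hq
        have h := aux_interp (c := (q:ℝ) * s) (hle (s + ε) q)
          (le_add_self : Ap ≤ Am + Ap) hMB
        rwa [show (q:ℝ) * s - (q:ℝ) * (s + ε) + (M:ℝ) * ε = ((M:ℝ) - |(q:ℝ)|) * ε by
          rw [habs]; ring] at h
      · have habs : |(q:ℝ)| = -(q:ℝ) := abs_of_neg hq
        have h := aux_interp (c := (q:ℝ) * s) (hle (s - ε) q)
          (le_self_add : Am ≤ Am + Ap) hMB
        rwa [show (q:ℝ) * s - (q:ℝ) * (s - ε) + (M:ℝ) * ε = ((M:ℝ) - |(q:ℝ)|) * ε by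
          rw [habs]; ring] at h
  -- geometric tail
  set r : ℝ≥0∞ := ENNReal.ofReal ((2:ℝ) ^ (-ε)) with hrdef
  have hr1 : r ≤ 1 := by
    rw [hrdef]
    exact ENNReal.ofReal_le_one.mpr
      (Real.rpow_le_one_of_one_le_of_nonpos (by norm_num) (by linarith))
  have hrtail : (1 - r)⁻¹ ≤ ENNReal.ofReal (3 / ε) := by
    have hkey := eps_le_one_sub_rpow hε hε1
    have hrle : r ≤ ENNReal.ofReal (1 - ε / 3) := by
      rw [hrdef]
      exact ENNReal.ofReal_le_ofReal (by linarith)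
    have hsub : ENNReal.ofReal (ε / 3) ≤ 1 - r := by
      have h1 : ENNReal.ofReal (ε / 3) = 1 - ENNReal.ofReal (1 - ε / 3) := by
        rw [← ENNReal.ofReal_one, ← ENNReal.ofReal_sub _ (by linarith : (0:ℝ) ≤ 1 - ε / 3)]
        norm_num
      rw [h1]
      exact tsub_le_tsub_left hrle 1
    calc (1 - r)⁻¹ ≤ (ENNReal.ofReal (ε / 3))⁻¹ := ENNReal.inv_le_inv' hsub
      _ = ENNReal.ofReal (3 / ε) := by
          rw [← ENNReal.ofReal_inv_of_pos (by positivity), inv_div]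
  -- bound on ℕ-indexed sums
  have key : ∀ f : ℕ → ℝ≥0∞, (∀ n, f n ≤ 1) →
      (∀ n : ℕ, f n ≤ ENNReal.ofReal ((2:ℝ) ^ (((M:ℝ) - (n:ℝ)) * ε))) →
      ∑' n, f n ≤ ((M:ℝ≥0∞) + 1) + ENNReal.ofReal (3 / ε) := by
    intro f h1 h2
    have hsplit : ∀ n : ℕ,
        f n = (if n < M + 1 then f n else 0) + (if n < M + 1 then 0 else f n) := by
      intro n
      split <;> simp
    rw [tsum_congr hsplit, ENNReal.tsum_add]
    refine add_le_add ?_ ?_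
    · rw [tsum_eq_sum (s := Finset.range (M + 1))
        (fun b hb => by rw [if_neg (by simpa using hb)])]
      calc ∑ b ∈ Finset.range (M + 1), (if b < M + 1 then f b else 0)
          ≤ ∑ _b ∈ Finset.range (M + 1), 1 :=
            Finset.sum_le_sum fun i _ => by
              split
              · exact h1 i
              · exact zero_le
        _ = (M:ℝ≥0∞) + 1 := by simp [Finset.sum_const, Finset.card_range]
    · have hinj : Function.Injective (fun k : ℕ => k + (M + 1)) := add_left_injective _
      have hsupp : Function.support (fun n : ℕ => if n < M + 1 then 0 else f n)
          ⊆ Set.range (fun k : ℕ => k + (M + 1)) := by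
        intro x hx
        by_cases hxM : x < M + 1
        · simp [hxM] at hx; omega
        · exact ⟨x - (M + 1), by simp only []; omega⟩
      rw [← Function.Injective.tsum_eq hinj hsupp]
      have hptw : ∀ k : ℕ,
          (if k + (M + 1) < M + 1 then 0 else f (k + (M + 1))) ≤ r ^ (k + 1) := by
        intro k
        rw [if_neg (by omega)]
        refine (h2 (k + (M + 1))).trans (le_of_eq ?_)
        have hexp : ((M:ℝ) - ((k + (M + 1) : ℕ) : ℝ)) * ε = (-ε) * (((k + 1 : ℕ)) : ℝ) := by
          push_cast
          ring
        rw [hexp, Real.rpow_mul (by norm_num : (0:ℝ) ≤ 2), Real.rpow_natCast,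
          ENNReal.ofReal_pow (Real.rpow_nonneg (by norm_num) _), hrdef]
      calc ∑' k : ℕ, (if k + (M + 1) < M + 1 then 0 else f (k + (M + 1)))
          ≤ ∑' k : ℕ, r ^ (k + 1) := ENNReal.tsum_le_tsum hptw
        _ = r * (1 - r)⁻¹ := ENNReal.tsum_geometric_add_one r
        _ ≤ 1 * (1 - r)⁻¹ := mul_le_mul_left hr1 _
        _ = (1 - r)⁻¹ := one_mul _
        _ ≤ ENNReal.ofReal (3 / ε) := hrtail
  -- split the ℤ-sum
  have hzsplit := tsum_of_nat_of_neg_add_one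
    (f := fun q : ℤ => min 1 (ENNReal.ofReal ((2:ℝ) ^ (((M:ℝ) - |(q:ℝ)|) * ε))))
    ENNReal.summable ENNReal.summable
  have habs1 : ∀ n : ℕ, |(((n : ℕ) : ℤ) : ℝ)| = (n : ℝ) := by
    intro n
    push_cast
    exact abs_of_nonneg (Nat.cast_nonneg n)
  have habs2 : ∀ n : ℕ, |((-((n : ℤ) + 1)) : ℝ)| = (n : ℝ) + 1 := by
    intro n
    push_cast
    rw [abs_neg]
    exact abs_of_nonneg (by positivity)
  have happ1 : ∑' n : ℕ, min 1 (ENNReal.ofReal ((2:ℝ) ^ (((M:ℝ) - |((n : ℤ) : ℝ)|) * ε)))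
      ≤ ((M:ℝ≥0∞) + 1) + ENNReal.ofReal (3 / ε) := by
    refine key _ (fun n => min_le_left _ _) fun n => ?_
    refine (min_le_right _ _).trans (le_of_eq ?_)
    rw [habs1 n]
  have happ2 : ∑' n : ℕ,
      min 1 (ENNReal.ofReal ((2:ℝ) ^ (((M:ℝ) - |((-((n : ℤ) + 1)) : ℝ)|) * ε)))
      ≤ ((M:ℝ≥0∞) + 1) + ENNReal.ofReal (3 / ε) := by
    refine key _ (fun n => min_le_left _ _) fun n => ?_
    refine (min_le_right _ _).trans ?_
    rw [habs2 n]
    exact ENNReal.ofReal_le_ofReal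
      (Real.rpow_le_rpow_of_exponent_le (by norm_num)
        (by nlinarith [hε.le]))
  have hT : ∑' q : ℤ, min 1 (ENNReal.ofReal ((2:ℝ) ^ (((M:ℝ) - |(q:ℝ)|) * ε)))
      ≤ 2 * (((M:ℝ≥0∞) + 1) + ENNReal.ofReal (3 / ε)) := by
    rw [hzsplit, two_mul]
    exact add_le_add (by simpa using happ1) (by simpa using happ2)
  -- assemble the ENNReal bound
  have hofM : ENNReal.ofReal ((M:ℝ) + 1) = (M:ℝ≥0∞) + 1 := by
    rw [ENNReal.ofReal_add (Nat.cast_nonneg M) zero_le_one, ENNReal.ofReal_natCast,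
      ENNReal.ofReal_one]
  have hmain : clNormOne t lam s F ≤ A * ENNReal.ofReal (2 * ((M:ℝ) + 1 + 3 / ε)) := by
    rw [hone]
    calc ∑' q : ℤ, ENNReal.ofReal ((2:ℝ) ^ ((q:ℝ) * s)) * blockTimeNorm t lam F q
        ≤ ∑' q : ℤ, A * min 1 (ENNReal.ofReal ((2:ℝ) ^ (((M:ℝ) - |(q:ℝ)|) * ε))) :=
          ENNReal.tsum_le_tsum hpt
      _ = A * ∑' q : ℤ, min 1 (ENNReal.ofReal ((2:ℝ) ^ (((M:ℝ) - |(q:ℝ)|) * ε))) :=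
          ENNReal.tsum_mul_left
      _ ≤ A * (2 * (((M:ℝ≥0∞) + 1) + ENNReal.ofReal (3 / ε))) := mul_le_mul_right hT A
      _ = A * ENNReal.ofReal (2 * ((M:ℝ) + 1 + 3 / ε)) := by
          congr 1
          rw [ENNReal.ofReal_mul (by norm_num : (0:ℝ) ≤ 2),
            ENNReal.ofReal_add (by positivity : (0:ℝ) ≤ (M:ℝ) + 1) (by positivity),
            ENNReal.ofReal_ofNat, hofM]
  have hfin : (clNormOne t lam s F).toReal ≤ A.toReal * (2 * ((M:ℝ) + 1 + 3 / ε)) := by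
    refine ENNReal.toReal_le_of_le_ofReal (by positivity) ?_
    calc clNormOne t lam s F ≤ A * ENNReal.ofReal (2 * ((M:ℝ) + 1 + 3 / ε)) := hmain
      _ = ENNReal.ofReal A.toReal * ENNReal.ofReal (2 * ((M:ℝ) + 1 + 3 / ε)) := by
          rw [ENNReal.ofReal_toReal hAne]
      _ = ENNReal.ofReal (A.toReal * (2 * ((M:ℝ) + 1 + 3 / ε))) :=
          (ENNReal.ofReal_mul ENNReal.toReal_nonneg).symm
  -- final real arithmetic
  have hD : 2 * ((M:ℝ) + 1 + 3 / ε) ≤ 16 * L / ε := by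
    rw [le_div_iff₀ hε]
    have h3ε : 3 / ε * ε = 3 := div_mul_cancel₀ 3 hε.ne'
    have hcancel : L / (ε * Real.log 2) * (ε * Real.log 2) = L :=
      div_mul_cancel₀ L (by positivity)
    have hq : (M:ℝ) * (ε * Real.log 2) < L + ε * Real.log 2 := by
      have := mul_lt_mul_of_pos_right hM2 (by positivity : (0:ℝ) < ε * Real.log 2)
      rw [add_mul, hcancel, one_mul] at this
      exact this
    have hp3 : 0.6931471803 * ((M:ℝ) * ε) ≤ Real.log 2 * ((M:ℝ) * ε) :=
      mul_le_mul_of_nonneg_right hlg.le (by positivity)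
    have hεlg : ε * Real.log 2 ≤ Real.log 2 :=
      mul_le_of_le_one_left hlgpos.le hε1
    have hMε : 0.6931471803 * ((M:ℝ) * ε) ≤ L + 0.6931471808 := by
      have : Real.log 2 * ((M:ℝ) * ε) < L + ε * Real.log 2 := by
        calc Real.log 2 * ((M:ℝ) * ε) = (M:ℝ) * (ε * Real.log 2) := by ring
          _ < L + ε * Real.log 2 := hq
      nlinarith
    have hMε0 : (0:ℝ) ≤ (M:ℝ) * ε := by positivity
    nlinarith [hL1, hε1, hε.le, hMε, hMε0, h3ε]
  calc (clNormOne t lam s F).toReal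
      ≤ A.toReal * (2 * ((M:ℝ) + 1 + 3 / ε)) := hfin
    _ ≤ A.toReal * (16 * L / ε) := mul_le_mul_of_nonneg_left hD ENNReal.toReal_nonneg
    _ = 16 * (A.toReal / ε) * L := by field_simp
end
end

section
/- (ℓ¹–ℓ∞ logarithmic summation lemma) Let (c_q)_{q∈ℤ} be a sequence of nonnegative reals, let ε ∈ (0,1], and suppose A₀ := sup_q c_q, A₋ := sup_q 2^{−εq} c_q and A₊ := sup_q 2^{εq} c_q are all finite with A₀ > 0. Then ∑_{q∈ℤ} c_q ≤ C (A₀/ε) log(e + (A₋ + A₊)/A₀) for an absolute constant C. -/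
private lemma geom_sum_finset {r : ℝ} (h0 : 0 ≤ r) (h1 : r < 1) (u : Finset ℕ) :
    ∑ n ∈ u, r ^ n ≤ (1 - r)⁻¹ := by
  have hs : Summable (fun n : ℕ => r ^ n) := summable_geometric_of_lt_one h0 h1
  calc ∑ n ∈ u, r ^ n ≤ ∑' n : ℕ, r ^ n :=
        Summable.sum_le_tsum u (fun n _ => pow_nonneg h0 n) hs
    _ = (1 - r)⁻¹ := tsum_geometric_of_lt_one h0 h1

private lemma tail_sum_le {r : ℝ} (h0 : 0 ≤ r) (h1 : r < 1) (a : ℤ) (t : Finset ℤ)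
    (ht : ∀ q ∈ t, a ≤ q) :
    ∑ q ∈ t, r ^ (q - a).toNat ≤ (1 - r)⁻¹ := by
  have hinj : ∀ x ∈ t, ∀ y ∈ t, (x - a).toNat = (y - a).toNat → x = y := by
    intro x hx y hy hxy
    have hx' := ht x hx; have hy' := ht y hy
    omega
  have := Finset.sum_image (s := t) (g := fun q : ℤ => (q - a).toNat)
    (f := fun n : ℕ => r ^ n) hinj
  rw [← this]
  exact geom_sum_finset h0 h1 _

private lemma half_tail (c : ℤ → ℝ) (A y : ℝ) (hA : 0 ≤ A) (hy : 0 < y)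
    (hbd : ∀ q : ℤ, c q ≤ A * Real.exp (-((q : ℝ) * y)))
    (N : ℕ) (t : Finset ℤ) (ht : ∀ q ∈ t, (N : ℤ) < q) :
    ∑ q ∈ t, c q ≤ A * Real.exp (-((N : ℝ) * y)) * (1 - Real.exp (-y))⁻¹ := by
  set r : ℝ := Real.exp (-y) with hr_def
  have hr0 : 0 ≤ r := (Real.exp_pos _).le
  have hr1 : r < 1 := by
    rw [hr_def, ← Real.exp_zero]
    exact Real.exp_lt_exp.mpr (by linarith)
  have hE : (0:ℝ) < Real.exp (-((N : ℝ) * y)) := Real.exp_pos _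
  have key : ∀ q ∈ t, c q ≤ A * Real.exp (-((N : ℝ) * y)) * r ^ (q - ((N : ℤ) + 1)).toNat := by
    intro q hq
    have hq' : (N : ℤ) + 1 ≤ q := ht q hq
    have hn : (((q - ((N : ℤ) + 1)).toNat : ℝ)) = (q : ℝ) - ((N : ℝ) + 1) := by
      have h2 : (((q - ((N : ℤ) + 1)).toNat : ℤ)) = q - ((N : ℤ) + 1) :=
        Int.toNat_of_nonneg (by omega)
      exact_mod_cast congrArg (fun z : ℤ => (z : ℝ)) h2
    have hpow : r ^ (q - ((N : ℤ) + 1)).toNat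
        = Real.exp ((((q - ((N : ℤ) + 1)).toNat : ℝ)) * (-y)) := by
      rw [Real.exp_nat_mul]
    have heq : Real.exp (-(((N : ℝ) + 1) * y)) * r ^ (q - ((N : ℤ) + 1)).toNat
        = Real.exp (-((q : ℝ) * y)) := by
      rw [hpow, ← Real.exp_add, hn]
      ring_nf
    calc c q ≤ A * Real.exp (-((q : ℝ) * y)) := hbd q
      _ = A * (Real.exp (-(((N : ℝ) + 1) * y)) * r ^ (q - ((N : ℤ) + 1)).toNat) := by
          rw [heq]
      _ ≤ A * (Real.exp (-((N : ℝ) * y)) * r ^ (q - ((N : ℤ) + 1)).toNat) := by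
          apply mul_le_mul_of_nonneg_left _ hA
          apply mul_le_mul_of_nonneg_right _ (pow_nonneg hr0 _)
          exact Real.exp_le_exp.mpr (by nlinarith)
      _ = A * Real.exp (-((N : ℝ) * y)) * r ^ (q - ((N : ℤ) + 1)).toNat := by ring
  calc ∑ q ∈ t, c q
      ≤ ∑ q ∈ t, A * Real.exp (-((N : ℝ) * y)) * r ^ (q - ((N : ℤ) + 1)).toNat :=
        Finset.sum_le_sum key
    _ = A * Real.exp (-((N : ℝ) * y)) * ∑ q ∈ t, r ^ (q - ((N : ℤ) + 1)).toNat := by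
        rw [Finset.mul_sum]
    _ ≤ A * Real.exp (-((N : ℝ) * y)) * (1 - r)⁻¹ := by
        apply mul_le_mul_of_nonneg_left _ (by positivity)
        exact tail_sum_le hr0 hr1 _ t ht

set_option maxHeartbeats 1000000 in
/-- **ℓ¹–ℓ∞ logarithmic summation lemma.**
There is an absolute constant `C > 0` such that: for any sequence `(c_q)_{q∈ℤ}` of
nonnegative reals, any `ε ∈ (0,1]`, and any finite bounds `A₀ > 0`, `A₋`, `A₊` with
`c_q ≤ A₀`, `2^{−εq} c_q ≤ A₋` and `2^{εq} c_q ≤ A₊` for all `q` (i.e. `A₀, A₋, A₊`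
dominate `sup_q c_q`, `sup_q 2^{−εq} c_q`, `sup_q 2^{εq} c_q` respectively), one has
`∑_{q∈ℤ} c_q ≤ C (A₀/ε) log(e + (A₋ + A₊)/A₀)`. -/
theorem ell_one_ell_infty_log_lemma :
    ∃ C : ℝ, 0 < C ∧
      ∀ (c : ℤ → ℝ) (ε A₀ Am Ap : ℝ),
        (∀ q, 0 ≤ c q) → 0 < ε → ε ≤ 1 → 0 < A₀ →
        (∀ q : ℤ, c q ≤ A₀) →
        (∀ q : ℤ, (2:ℝ) ^ (-(ε * (q:ℝ))) * c q ≤ Am) →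
        (∀ q : ℤ, (2:ℝ) ^ (ε * (q:ℝ)) * c q ≤ Ap) →
        ∑' q : ℤ, c q ≤ C * (A₀ / ε) * Real.log (Real.exp 1 + (Am + Ap) / A₀) := by
  refine ⟨100, by norm_num, ?_⟩
  intro c ε A₀ Am Ap h0 hε hε1 hA₀ hbd0 hm hp
  -- basic positivity facts
  have hAm : 0 ≤ Am := le_trans (mul_nonneg (Real.rpow_nonneg (by norm_num) _) (h0 0)) (hm 0)
  have hAp : 0 ≤ Ap := le_trans (mul_nonneg (Real.rpow_nonneg (by norm_num) _) (h0 0)) (hp 0)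
  have hx0 : 0 ≤ (Am + Ap) / A₀ := by positivity
  set x : ℝ := (Am + Ap) / A₀ with hx_def
  set L : ℝ := Real.log (Real.exp 1 + x) with hL_def
  have hL1 : 1 ≤ L := by
    rw [hL_def]
    calc (1:ℝ) = Real.log (Real.exp 1) := (Real.log_exp 1).symm
      _ ≤ Real.log (Real.exp 1 + x) :=
          Real.log_le_log (Real.exp_pos 1) (by linarith)
  have hlog2a : (2:ℝ)/3 < Real.log 2 := by
    have := Real.log_two_gt_d9; linarith
  have hlog2b : Real.log 2 < 0.7 := by
    have := Real.log_two_lt_d9; linarith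
  set y : ℝ := ε * Real.log 2 with hy_def
  have hy : 0 < y := by rw [hy_def]; positivity
  set N : ℕ := ⌈L / y⌉₊ with hN_def
  have hNy : L ≤ (N : ℝ) * y := by
    have h := Nat.le_ceil (L / y)
    calc L = L / y * y := by field_simp
      _ ≤ (N : ℝ) * y := mul_le_mul_of_nonneg_right h hy.le
  have hNy2 : (N : ℝ) * y < L + y := by
    have h := Nat.ceil_lt_add_one (show (0:ℝ) ≤ L / y by positivity)
    have h2 := mul_lt_mul_of_pos_right h hy
    rw [add_mul, one_mul, div_mul_cancel₀ _ hy.ne'] at h2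
    exact h2
  -- the key bound on exp(-N y)
  set E : ℝ := Real.exp (-((N : ℝ) * y)) with hE_def
  have hEpos : 0 < E := Real.exp_pos _
  have hE1 : E * (Am + Ap) ≤ A₀ := by
    have h1 : E ≤ Real.exp (-L) := Real.exp_le_exp.mpr (by linarith)
    have h2 : Real.exp (-L) = (Real.exp 1 + x)⁻¹ := by
      rw [hL_def, Real.exp_neg, Real.exp_log (by positivity)]
    have h3 : (Real.exp 1 + x)⁻¹ * (Am + Ap) ≤ A₀ := by
      rw [inv_mul_le_iff₀ (by positivity)]
      have hxA : x * A₀ = Am + Ap := by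
        rw [hx_def]; field_simp
      nlinarith [Real.exp_pos 1, hA₀.le]
    calc E * (Am + Ap) ≤ (Real.exp 1 + x)⁻¹ * (Am + Ap) := by
          apply mul_le_mul_of_nonneg_right _ (by linarith)
          rw [← h2]; exact h1
      _ ≤ A₀ := h3
  -- bound on (1 - r)⁻¹
  set r : ℝ := Real.exp (-y) with hr_def
  have hr0 : 0 < r := Real.exp_pos _
  have hr1 : r < 1 := by
    rw [hr_def, ← Real.exp_zero]; exact Real.exp_lt_exp.mpr (by linarith)
  have hy1 : y ≤ 1 := by
    rw [hy_def]; nlinarith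
  have hεy : ε / 2 ≤ y := by rw [hy_def]; nlinarith
  have hr1y : r * (1 + y) ≤ 1 := by
    have h1 : 1 + y ≤ Real.exp y := by
      have := Real.add_one_le_exp y; linarith
    have h2 : r * (1 + y) ≤ r * Real.exp y :=
      mul_le_mul_of_nonneg_left h1 hr0.le
    have h3 : r * Real.exp y = 1 := by
      rw [hr_def, ← Real.exp_add]; simp
    linarith
  have hquarter : ε / 4 ≤ 1 - r := by nlinarith
  have hinv : (1 - r)⁻¹ ≤ 4 / ε := by
    have h := inv_anti₀ (show (0:ℝ) < ε/4 by positivity) hquarter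
    rwa [show (ε/4)⁻¹ = 4/ε by rw [inv_div]] at h
  have hinv0 : 0 ≤ (1 - r)⁻¹ := inv_nonneg.mpr (by linarith)
  -- pointwise exponential bounds
  have hbdp : ∀ q : ℤ, c q ≤ Ap * Real.exp (-((q : ℝ) * y)) := by
    intro q
    have hpow : (0:ℝ) < (2:ℝ) ^ (ε * (q:ℝ)) := Real.rpow_pos_of_pos (by norm_num) _
    have h1 : c q ≤ Ap / (2:ℝ) ^ (ε * (q:ℝ)) := by
      rw [le_div_iff₀ hpow, mul_comm]; exact hp q
    have h2 : Ap / (2:ℝ) ^ (ε * (q:ℝ)) = Ap * Real.exp (-((q : ℝ) * y)) := by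
      rw [Real.rpow_def_of_pos (by norm_num), div_eq_mul_inv, ← Real.exp_neg, hy_def]
      ring_nf
    linarith [h2.le, h2.ge]
  have hbdm : ∀ q : ℤ, c (-q) ≤ Am * Real.exp (-((q : ℝ) * y)) := by
    intro q
    have hpow : (0:ℝ) < (2:ℝ) ^ (-(ε * ((-q : ℤ) : ℝ))) := Real.rpow_pos_of_pos (by norm_num) _
    have h1 : c (-q) ≤ Am / (2:ℝ) ^ (-(ε * ((-q : ℤ) : ℝ))) := by
      rw [le_div_iff₀ hpow, mul_comm]; exact hm (-q)
    have h2 : Am / (2:ℝ) ^ (-(ε * ((-q : ℤ) : ℝ))) = Am * Real.exp (-((q : ℝ) * y)) := by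
      rw [Real.rpow_def_of_pos (by norm_num), div_eq_mul_inv, ← Real.exp_neg, hy_def]
      push_cast
      ring_nf
    linarith [h2.le, h2.ge]
  -- bound each finite partial sum
  have hB0 : (0:ℝ) ≤ 100 * (A₀ / ε) * L := by positivity
  apply tsum_le_of_sum_le' hB0
  intro s
  -- split the sum
  set t := s.filter (fun q : ℤ => ¬ q.natAbs ≤ N) with ht_def
  have hsplit1 : ∑ q ∈ s, c q
      = ∑ q ∈ s.filter (fun q : ℤ => q.natAbs ≤ N), c q + ∑ q ∈ t, c q := by
    rw [ht_def]
    exact (Finset.sum_filter_add_sum_filter_not s _ c).symm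
  have hsplit2 : ∑ q ∈ t, c q
      = ∑ q ∈ t.filter (fun q : ℤ => (N : ℤ) < q), c q
        + ∑ q ∈ t.filter (fun q : ℤ => ¬ (N : ℤ) < q), c q :=
    (Finset.sum_filter_add_sum_filter_not t _ c).symm
  -- middle part
  have hmid : ∑ q ∈ s.filter (fun q : ℤ => q.natAbs ≤ N), c q ≤ (2 * (N : ℝ) + 1) * A₀ := by
    have hsub : s.filter (fun q : ℤ => q.natAbs ≤ N) ⊆ Finset.Icc (-(N:ℤ)) N := by
      intro q hq
      simp only [Finset.mem_filter] at hq
      simp only [Finset.mem_Icc]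
      omega
    calc ∑ q ∈ s.filter (fun q : ℤ => q.natAbs ≤ N), c q
        ≤ ∑ q ∈ Finset.Icc (-(N:ℤ)) N, c q :=
          Finset.sum_le_sum_of_subset_of_nonneg hsub (fun q _ _ => h0 q)
      _ ≤ ∑ _q ∈ Finset.Icc (-(N:ℤ)) N, A₀ := Finset.sum_le_sum (fun q _ => hbd0 q)
      _ = ((Finset.Icc (-(N:ℤ)) N).card : ℝ) * A₀ := by
          rw [Finset.sum_const, nsmul_eq_mul]
      _ = (2 * (N : ℝ) + 1) * A₀ := by
          rw [Int.card_Icc]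
          have : ((N:ℤ) + 1 - -(N:ℤ)).toNat = 2 * N + 1 := by omega
          rw [this]; push_cast; ring
  -- positive tail
  have htailp : ∑ q ∈ t.filter (fun q : ℤ => (N : ℤ) < q), c q ≤ Ap * E * (1 - r)⁻¹ := by
    exact half_tail c Ap y hAp hy hbdp N _ (fun q hq => (Finset.mem_filter.mp hq).2)
  -- negative tail
  have htailm : ∑ q ∈ t.filter (fun q : ℤ => ¬ (N : ℤ) < q), c q ≤ Am * E * (1 - r)⁻¹ := by
    set u := t.filter (fun q : ℤ => ¬ (N : ℤ) < q) with hu_def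
    have hu : ∀ q ∈ u, q < -(N:ℤ) := by
      intro q hq
      simp only [hu_def, ht_def, Finset.mem_filter] at hq
      omega
    have hinj : ∀ a ∈ u, ∀ b ∈ u, -a = -b → a = b := by intro a _ b _ h; omega
    have himg : ∑ n ∈ u.image (fun q : ℤ => -q), c (-n) = ∑ q ∈ u, c q := by
      rw [Finset.sum_image hinj]
      simp
    rw [← himg]
    apply half_tail (fun n => c (-n)) Am y hAm hy hbdm N
    intro q hq
    obtain ⟨a, ha, rfl⟩ := Finset.mem_image.mp hq
    have := hu a ha
    omega
  -- final arithmetic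
  have h2N : (2 * (N : ℝ) + 1) * ε ≤ 7 * L := by
    have hNnn : (0:ℝ) ≤ (N : ℝ) := Nat.cast_nonneg N
    rw [hy_def] at hNy2
    nlinarith [mul_nonneg hNnn hε.le]
  have htails : Ap * E * (1 - r)⁻¹ + Am * E * (1 - r)⁻¹ ≤ 4 * A₀ / ε := by
    have h1 : Ap * E * (1 - r)⁻¹ + Am * E * (1 - r)⁻¹ = (E * (Am + Ap)) * (1 - r)⁻¹ := by ring
    rw [h1]
    calc (E * (Am + Ap)) * (1 - r)⁻¹ ≤ A₀ * (1 - r)⁻¹ :=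
          mul_le_mul_of_nonneg_right hE1 hinv0
      _ ≤ A₀ * (4 / ε) := mul_le_mul_of_nonneg_left hinv hA₀.le
      _ = 4 * A₀ / ε := by ring
  have hAL : 0 ≤ A₀ * L := by positivity
  calc ∑ q ∈ s, c q
      = ∑ q ∈ s.filter (fun q : ℤ => q.natAbs ≤ N), c q
        + (∑ q ∈ t.filter (fun q : ℤ => (N : ℤ) < q), c q
          + ∑ q ∈ t.filter (fun q : ℤ => ¬ (N : ℤ) < q), c q) := by
        rw [hsplit1, hsplit2]
    _ ≤ (2 * (N : ℝ) + 1) * A₀ + 4 * A₀ / ε := by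
        have := htails
        linarith [hmid, htailp, htailm]
    _ ≤ 100 * (A₀ / ε) * L := by
        rw [← sub_nonneg]
        have expand : 100 * (A₀ / ε) * L - ((2 * (N : ℝ) + 1) * A₀ + 4 * A₀ / ε)
            = (100 * A₀ * L - ((2 * (N : ℝ) + 1) * A₀ * ε + 4 * A₀)) / ε := by
          field_simp
        rw [expand]
        apply div_nonneg _ hε.le
        nlinarith [mul_le_mul_of_nonneg_left h2N hA₀.le,
          mul_le_mul_of_nonneg_left hL1 hA₀.le, hA₀.le]
end
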